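/- With a_ω(n) the coefficients of Ramanujan's mock theta function ω(q), one has a_ω(16) ≡ 9 (mod 23) and a_ω(416) ≡ 9 (mod 23). Explicitly, a_ω(16) = 101 and a_ω(416) = 147019574355949. -/

import Mathlib

/-- Coefficients of Ramanujan's mock theta function `ω(q)`:
`ω(q) = ∑_{n≥0} q^{2n(n+1)} / ∏_{j=0}^{n} (1 - q^{2j+1})²`.
Since the `n`-th summand has order `≥ 2n(n+1) ≥ n`, the `N`-th coefficient only
receives contributions from summands with `n ≤ N`. -/
noncomputable def aOmega (N : ℕ) : ℚ :=
  PowerSeries.coeff (R := ℚ) N (∑ n ∈ Finset.range (N + 1),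
    (PowerSeries.X : PowerSeries ℚ) ^ (2 * n * (n + 1)) *
      ∏ j ∈ Finset.range (n + 1),
        ((1 - (PowerSeries.X : PowerSeries ℚ) ^ (2 * j + 1))⁻¹) ^ 2)


open PowerSeries Finset

namespace AOmegaAux

/-- One step of truncated division by `1 - X^k`: consume input coefficients,
accumulating the output coefficients in reverse order. -/
def divGo (k : ℕ) : List ℕ → List ℕ → List ℕ
  | [], acc => acc
  | a :: r, acc => divGo k r ((a + acc.getD (k - 1) 0) :: acc)

def divOnce (k : ℕ) (l : List ℕ) : List ℕ := (divGo k l []).reverse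

def ansAux (N : ℕ) : ℕ → ℕ × List ℕ
  | 0 => let l := divOnce 1 (divOnce 1 (1 :: List.replicate N 0)); (l.getD N 0, l)
  | n + 1 =>
      let p := ansAux N n
      let k := 2 * n + 3
      let l := divOnce k (divOnce k p.2)
      (p.1 + (if 2 * (n + 1) * (n + 2) ≤ N then l.getD (N - 2 * (n + 1) * (n + 2)) 0 else 0), l)

noncomputable def Pn (n : ℕ) : PowerSeries ℚ :=
  ∏ j ∈ range (n + 1), ((1 - (X : PowerSeries ℚ) ^ (2 * j + 1))⁻¹) ^ 2

def Rep (f : PowerSeries ℚ) (l : List ℕ) : Prop :=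
  ∀ i, i < l.length → coeff (R := ℚ) i f = (l.getD i 0 : ℚ)

lemma key (k : ℕ) (hk : 0 < k) (f : PowerSeries ℚ) (m : ℕ) :
    coeff (R := ℚ) m (f * (1 - X ^ k)⁻¹) =
      coeff (R := ℚ) m f + (if k ≤ m then coeff (R := ℚ) (m - k) (f * (1 - X ^ k)⁻¹) else 0) := by
  have hc : constantCoeff (R := ℚ) (1 - X ^ k : PowerSeries ℚ) ≠ 0 := by
    simp [map_pow, zero_pow hk.ne']
  have h1 : f * (1 - X ^ k)⁻¹ * (1 - X ^ k) = f := by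
    rw [mul_assoc, PowerSeries.inv_mul_cancel _ hc, mul_one]
  have h2 := congrArg (coeff (R := ℚ) m) h1
  rw [mul_sub, mul_one, map_sub, coeff_mul_X_pow'] at h2
  rw [← h2]; ring

lemma divGo_spec (k : ℕ) (hk : 0 < k) (f : PowerSeries ℚ) :
    ∀ (inp acc : List ℕ),
      (∀ j, j < inp.length → coeff (R := ℚ) (acc.length + j) f = (inp.getD j 0 : ℚ)) →
      (∀ i, i < acc.length →
        coeff (R := ℚ) (acc.length - 1 - i) (f * (1 - X ^ k)⁻¹) = (acc.getD i 0 : ℚ)) →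
      (divGo k inp acc).length = inp.length + acc.length ∧
      ∀ i, i < inp.length + acc.length →
        coeff (R := ℚ) (inp.length + acc.length - 1 - i) (f * (1 - X ^ k)⁻¹) =
          ((divGo k inp acc).getD i 0 : ℚ)
  | [], acc, hinp, hacc => by simpa [divGo] using hacc
  | a :: r, acc, hinp, hacc => by
    set g := f * (1 - X ^ k)⁻¹ with hg
    set m := acc.length with hm
    have hhead : coeff (R := ℚ) m g = ((a + acc.getD (k - 1) 0 : ℕ) : ℚ) := by
      have h0 : coeff (R := ℚ) m f = (a : ℚ) := by
        simpa using hinp 0 (by simp)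
      rw [key k hk f m, h0]
      push_cast
      congr 1
      by_cases hkm : k ≤ m
      · have := hacc (k - 1) (by omega)
        have hidx : m - 1 - (k - 1) = m - k := by omega
        rw [hidx] at this
        rw [if_pos hkm, this]
      · rw [if_neg hkm, List.getD_eq_default _ _ (by omega)]
        simp
    have hacc' : ∀ i, i < m + 1 →
        coeff (R := ℚ) (m + 1 - 1 - i) g = (((a + acc.getD (k - 1) 0) :: acc).getD i 0 : ℚ) := by
      intro i hi
      match i with
      | 0 => simpa using hhead
      | j + 1 =>
        have h := hacc j (by omega)
        have hidx : m + 1 - 1 - (j + 1) = m - 1 - j := by omega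
        rw [hidx, List.getD_cons_succ]
        exact h
    have hinp' : ∀ j, j < r.length →
        coeff (R := ℚ) (((a + acc.getD (k - 1) 0) :: acc).length + j) f = (r.getD j 0 : ℚ) := by
      intro j hj
      have := hinp (j + 1) (by simpa using Nat.succ_lt_succ hj)
      simpa [Nat.add_assoc, Nat.add_comm 1 j] using this
    obtain ⟨hlen, hco⟩ := divGo_spec k hk f r ((a + acc.getD (k - 1) 0) :: acc)
      hinp' (by simpa using hacc')
    constructor
    · show (divGo k r ((a + acc.getD (k - 1) 0) :: acc)).length = (a :: r).length + acc.length
      rw [hlen]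
      simp only [List.length_cons]
      omega
    · intro i hi
      show coeff (R := ℚ) ((a :: r).length + acc.length - 1 - i) g =
        ((divGo k r ((a + acc.getD (k - 1) 0) :: acc)).getD i 0 : ℚ)
      have hi' : i < r.length + ((a + acc.getD (k - 1) 0) :: acc).length := by
        simp only [List.length_cons] at hi ⊢; omega
      have h2 := hco i hi'
      have hidx : r.length + ((a + acc.getD (k - 1) 0) :: acc).length - 1 - i =
          (a :: r).length + acc.length - 1 - i := by
        simp only [List.length_cons]; omega
      rw [hidx] at h2
      exact h2

lemma getD_reverse (l : List ℕ) (i : ℕ) (h : i < l.length) :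
    l.reverse.getD i 0 = l.getD (l.length - 1 - i) 0 := by
  rw [List.getD_eq_getElem _ _ (by simpa using h), List.getD_eq_getElem _ _ (by omega)]
  exact List.getElem_reverse (by simpa using h)

lemma divOnce_spec (k : ℕ) (hk : 0 < k) (f : PowerSeries ℚ) (l : List ℕ) (hl : Rep f l) :
    (divOnce k l).length = l.length ∧ Rep (f * (1 - X ^ k)⁻¹) (divOnce k l) := by
  obtain ⟨hlen, hco⟩ := divGo_spec k hk f l []
    (fun j hj => by simpa using hl j (by simpa using hj)) (by simp)
  simp only [List.length_nil, Nat.add_zero] at hlen hco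
  have hlen' : (divOnce k l).length = l.length := by
    simp [divOnce, hlen]
  refine ⟨hlen', ?_⟩
  intro i hi
  rw [hlen'] at hi
  have h1 := hco (l.length - 1 - i) (by omega)
  have hidx : l.length - 1 - (l.length - 1 - i) = i := by omega
  rw [hidx] at h1
  rw [h1]
  show ((divGo k l []).getD (l.length - 1 - i) 0 : ℚ) = ((divGo k l []).reverse.getD i 0 : ℚ)
  rw [getD_reverse _ _ (by rw [hlen]; exact hi), hlen]

lemma rep_one (N : ℕ) : Rep 1 (1 :: List.replicate N 0) := by
  intro i hi
  match i with
  | 0 => simp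
  | j + 1 =>
    rw [coeff_one, if_neg (by omega)]
    simp only [List.getD_cons_succ]
    rw [List.getD_eq_getElem?_getD]
    rcases Nat.lt_or_ge j N with h | h
    · simp [List.getElem?_replicate, h]
    · simp [List.getElem?_replicate, Nat.not_lt.mpr h]

lemma Pn_zero : Pn 0 = 1 * (1 - (X : PowerSeries ℚ) ^ 1)⁻¹ * (1 - (X : PowerSeries ℚ) ^ 1)⁻¹ := by
  simp [Pn, sq]

lemma Pn_succ (n : ℕ) : Pn (n + 1) =
    Pn n * (1 - (X : PowerSeries ℚ) ^ (2 * n + 3))⁻¹ * (1 - (X : PowerSeries ℚ) ^ (2 * n + 3))⁻¹ := by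
  rw [Pn, prod_range_succ, ← Pn]
  have : 2 * (n + 1) + 1 = 2 * n + 3 := by ring
  rw [this, sq, mul_assoc]

lemma ansAux_spec (N : ℕ) : ∀ M : ℕ,
    (ansAux N M).2.length = N + 1 ∧ Rep (Pn M) (ansAux N M).2 ∧
    ((ansAux N M).1 : ℚ) = ∑ n ∈ range (M + 1),
      (if 2 * n * (n + 1) ≤ N then coeff (R := ℚ) (N - 2 * n * (n + 1)) (Pn n) else 0)
  | 0 => by
    have h0 : (1 :: List.replicate N (0 : ℕ)).length = N + 1 := by simp
    obtain ⟨hl1, hr1⟩ := divOnce_spec 1 one_pos 1 _ (rep_one N)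
    obtain ⟨hl2, hr2⟩ := divOnce_spec 1 one_pos _ _ hr1
    rw [hl1, h0] at hl2
    rw [← Pn_zero] at hr2
    refine ⟨hl2, hr2, ?_⟩
    rw [sum_range_one, if_pos (by simp)]
    simp only [ansAux]
    rw [Nat.sub_zero, ← hr2 N (by rw [hl2]; omega)]
  | M + 1 => by
    obtain ⟨hlen, hrep, hsum⟩ := ansAux_spec N M
    obtain ⟨hl1, hr1⟩ := divOnce_spec (2 * M + 3) (by omega) _ _ hrep
    obtain ⟨hl2, hr2⟩ := divOnce_spec (2 * M + 3) (by omega) _ _ hr1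
    rw [hl1, hlen] at hl2
    rw [← Pn_succ M] at hr2
    refine ⟨hl2, hr2, ?_⟩
    rw [sum_range_succ, ← hsum]
    show (((ansAux N M).1 + if 2 * (M + 1) * (M + 2) ≤ N then
        (divOnce (2 * M + 3) (divOnce (2 * M + 3) (ansAux N M).2)).getD
          (N - 2 * (M + 1) * (M + 2)) 0 else 0 : ℕ) : ℚ) = _
    have hMM : 2 * (M + 1) * (M + 1 + 1) = 2 * (M + 1) * (M + 2) := by ring
    push_cast
    rw [hMM]
    congr 1
    by_cases h : 2 * (M + 1) * (M + 2) ≤ N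
    · rw [if_pos h, if_pos h]
      exact (hr2 (N - 2 * (M + 1) * (M + 2)) (by rw [hl2]; omega)).symm
    · rw [if_neg h, if_neg h]

lemma aOmega_eq (N M : ℕ) (hMN : M ≤ N) (hM : N < 2 * (M + 1) * (M + 2)) :
    aOmega N = ((ansAux N M).1 : ℚ) := by
  obtain ⟨-, -, hsum⟩ := ansAux_spec N M
  rw [hsum, aOmega, map_sum]
  have hterm : ∀ n ∈ range (N + 1),
      coeff (R := ℚ) N ((X : PowerSeries ℚ) ^ (2 * n * (n + 1)) *
        ∏ j ∈ range (n + 1), ((1 - (X : PowerSeries ℚ) ^ (2 * j + 1))⁻¹) ^ 2) =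
      (if 2 * n * (n + 1) ≤ N then coeff (R := ℚ) (N - 2 * n * (n + 1)) (Pn n) else 0) := by
    intro n _
    rw [← Pn]
    exact coeff_X_pow_mul' (Pn n) (2 * n * (n + 1)) N
  rw [sum_congr rfl hterm]
  refine (sum_subset (range_subset_range.2 (by omega)) ?_).symm
  intro n hn hn'
  rw [mem_range] at hn
  rw [mem_range, not_lt] at hn'
  have h1 : 2 * (M + 1) * (M + 2) ≤ 2 * n * (n + 1) := by
    have ha : 2 * (M + 1) ≤ 2 * n := by omega
    have hb : M + 2 ≤ n + 1 := by omega
    exact Nat.mul_le_mul ha hb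
  rw [if_neg (by omega)]

end AOmegaAux

set_option maxRecDepth 10000 in
theorem aOmega_congruences_mod_23 :
    aOmega 16 = 101 ∧ aOmega 416 = 147019574355949 ∧
    (101 : ℤ) ≡ 9 [ZMOD (23 : ℤ)] ∧ (147019574355949 : ℤ) ≡ 9 [ZMOD (23 : ℤ)] := by
  refine ⟨?_, ?_, by decide, by decide⟩
  · rw [AOmegaAux.aOmega_eq 16 2 (by norm_num) (by norm_num)]
    norm_num [show (AOmegaAux.ansAux 16 2).1 = 101 by decide]
  · rw [AOmegaAux.aOmega_eq 416 13 (by norm_num) (by norm_num)]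
    norm_num [show (AOmegaAux.ansAux 416 13).1 = 147019574355949 by decide]
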